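/- Let q ∈ (0,1), m > 0, and suppose a bounded function ψ : Z^d → ℝ satisfies: there exist k_0 and a scale sequence L_{k+1} = ⌊L_k^{4/3}⌋ + 1 such that for every y with ‖y‖ ≥ L_{k_0+1}, choosing k with L_{k+1} ≤ ‖y‖ < L_{k+2}, the function x ↦ |ψ(x)| is (L_k, e^{−m(1+L_k^{−1/8})L_k})-subharmonic on the ball B_R(y) with R = ‖y‖ − 2L_k − 1, and ‖ψ‖_∞ ≤ 1. Then, provided L_{k_0} is sufficiently large (depending only on m and the dimension), |ψ(y)| ≤ e^{−m‖y‖} for all y with ‖y‖ ≥ L_{k_0+1}. -/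

import Mathlib

/-- Helper: from `a ^ q ≤ b` deduce `a ≤ b ^ p` when `q * p = 1`. -/
lemma stmt14_aux_rpow (a b p q : ℝ) (ha : 0 ≤ a) (hp : 0 ≤ p) (hq : q * p = 1)
    (hb : a ^ q ≤ b) : a ≤ b ^ p := by
  calc a = (a ^ q) ^ p := by rw [← Real.rpow_mul ha, hq, Real.rpow_one]
  _ ≤ b ^ p := Real.rpow_le_rpow (Real.rpow_nonneg ha q) hb hp

set_option maxHeartbeats 1600000 in
theorem stmt_14 (d : ℕ) (m : ℝ) (hm : 0 < m) :
    ∃ Lstar : ℕ, ∀ L : ℕ → ℕ, 2 < L 0 →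
      (∀ k, L (k + 1) = ⌊(L k : ℝ) ^ ((4 : ℝ) / 3)⌋₊ + 1) →
      ∀ k0 : ℕ, Lstar ≤ L k0 →
      ∀ ψ : (Fin d → ℤ) → ℝ, (∀ x, |ψ x| ≤ 1) →
      (∀ (y : Fin d → ℤ) (k : ℕ), k0 ≤ k →
        (L (k + 1) : ℝ) ≤ ‖y‖ → ‖y‖ < (L (k + 2) : ℝ) →
        ∀ v : Fin d → ℤ,
          (∀ z : Fin d → ℤ, ‖z - v‖ ≤ (L k : ℝ) →
            ‖z - y‖ ≤ ‖y‖ - 2 * (L k : ℝ) - 1) →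
          ∃ z : Fin d → ℤ, ‖z - v‖ ≤ (L k : ℝ) + 1 ∧
            |ψ v| ≤ Real.exp (-m * (1 + (L k : ℝ) ^ (-(1 / 8 : ℝ))) * (L k : ℝ)) * |ψ z|) →
      ∀ y : Fin d → ℤ, (L (k0 + 1) : ℝ) ≤ ‖y‖ → |ψ y| ≤ Real.exp (-m * ‖y‖) := by
  classical
  refine ⟨2 ^ 20, ?_⟩
  intro L hL0 hLrec k0 hLstar ψ hψ hsub y hy
  -- basic monotonicity of L
  have key : ∀ k, 3 ≤ L k → L k + 1 ≤ L (k + 1) := by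
    intro k h3
    rw [hLrec k]
    have h1 : (1 : ℝ) ≤ (L k : ℝ) := by exact_mod_cast (by omega : 1 ≤ L k)
    have hle : (L k : ℝ) ≤ (L k : ℝ) ^ ((4 : ℝ) / 3) := by
      calc (L k : ℝ) = (L k : ℝ) ^ (1 : ℝ) := (Real.rpow_one _).symm
      _ ≤ _ := Real.rpow_le_rpow_of_exponent_le h1 (by norm_num)
    have := Nat.le_floor hle
    omega
  have h3all : ∀ k, 3 ≤ L k := by
    intro k
    induction k with
    | zero => omega
    | succ n ih => have := key n ih; omega
  have hgrow : ∀ a j, L a + j ≤ L (a + j) := by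
    intro a j
    induction j with
    | zero => simp
    | succ n ih =>
      have h := key (a + n) (h3all _)
      have : a + (n + 1) = (a + n) + 1 := rfl
      rw [this]
      omega
  set r : ℝ := ‖y‖ with hr_def
  have hr0 : (0 : ℝ) ≤ r := norm_nonneg _
  -- find k with L (k+1) ≤ r < L (k+2)
  have hex : ∃ j, r < (L (k0 + 1 + j) : ℝ) := by
    refine ⟨⌈r⌉₊ + 1, ?_⟩
    have h1 : L (k0 + 1) + (⌈r⌉₊ + 1) ≤ L (k0 + 1 + (⌈r⌉₊ + 1)) := hgrow _ _
    have h2 : r ≤ (⌈r⌉₊ : ℝ) := Nat.le_ceil r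
    have h3 : (⌈r⌉₊ + 1 : ℕ) ≤ L (k0 + 1 + (⌈r⌉₊ + 1)) := by omega
    have : ((⌈r⌉₊ + 1 : ℕ) : ℝ) ≤ (L (k0 + 1 + (⌈r⌉₊ + 1)) : ℝ) := by exact_mod_cast h3
    push_cast at this
    linarith
  set j0 := Nat.find hex with hj0
  have hj0spec : r < (L (k0 + 1 + j0) : ℝ) := Nat.find_spec hex
  have hj0pos : j0 ≠ 0 := by
    intro h
    rw [h] at hj0spec
    simp at hj0spec
    linarith
  obtain ⟨j1, hj1⟩ := Nat.exists_eq_succ_of_ne_zero hj0pos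
  set k := k0 + j1 with hk_def
  have hklow : (L (k + 1) : ℝ) ≤ r := by
    have := Nat.find_min hex (m := j1) (by omega)
    push_neg at this
    have he : k0 + 1 + j1 = k + 1 := by omega
    rwa [he] at this
  have hkhigh : r < (L (k + 2) : ℝ) := by
    have he : k0 + 1 + j0 = k + 2 := by omega
    rwa [he] at hj0spec
  have hk0k : k0 ≤ k := by omega
  -- size facts for Λ = L k
  set Λ : ℝ := (L k : ℝ) with hΛ_def
  have hLk : 1048576 ≤ L k := by
    have := hgrow k0 j1
    rw [← hk_def] at this
    omega
  have hΛbig : (1048576 : ℝ) ≤ Λ := by rw [hΛ_def]; exact_mod_cast hLk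
  have hΛpos : (0 : ℝ) < Λ := by linarith
  have hΛ1 : (1 : ℝ) ≤ Λ := by linarith
  -- r ≥ Λ^{4/3}
  have hr43 : Λ ^ ((4 : ℝ) / 3) ≤ r := by
    have h1 : Λ ^ ((4 : ℝ) / 3) < (L (k + 1) : ℝ) := by
      rw [hLrec k]
      push_cast
      exact Nat.lt_floor_add_one _
    linarith
  set ε : ℝ := Λ ^ (-(1 / 8 : ℝ)) with hε_def
  have hε0 : 0 ≤ ε := Real.rpow_nonneg (le_of_lt hΛpos) _
  have hε1 : ε ≤ 1 := Real.rpow_le_one_of_one_le_of_nonpos hΛ1 (by norm_num)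
  set A : ℝ := Λ ^ ((7 : ℝ) / 8) with hA_def
  have hεΛ : ε * Λ = A := by
    rw [hε_def, hA_def]
    calc Λ ^ (-(1 / 8 : ℝ)) * Λ = Λ ^ (-(1 / 8 : ℝ)) * Λ ^ (1 : ℝ) := by rw [Real.rpow_one]
    _ = Λ ^ (-(1 / 8 : ℝ) + 1) := (Real.rpow_add hΛpos _ _).symm
    _ = Λ ^ ((7 : ℝ) / 8) := by norm_num
  have hA2 : (2 : ℝ) ≤ A := by
    refine stmt14_aux_rpow 2 Λ ((7 : ℝ) / 8) ((8 : ℝ) / 7) (by norm_num) (by norm_num)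
      (by norm_num) ?_
    have h1 : (2 : ℝ) ^ ((8 : ℝ) / 7) ≤ (2 : ℝ) ^ (2 : ℝ) :=
      Real.rpow_le_rpow_of_exponent_le (by norm_num) (by norm_num)
    have h2 : (2 : ℝ) ^ (2 : ℝ) = 4 := by
      rw [show (2 : ℝ) = ((2 : ℕ) : ℝ) from by norm_num, Real.rpow_natCast]
      norm_num
    linarith
  set B : ℝ := Λ ^ ((5 : ℝ) / 24) with hB_def
  have hB16 : (16 : ℝ) ≤ B := by
    refine stmt14_aux_rpow 16 Λ ((5 : ℝ) / 24) ((24 : ℝ) / 5) (by norm_num) (by norm_num)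
      (by norm_num) ?_
    have h1 : (16 : ℝ) ^ ((24 : ℝ) / 5) ≤ (16 : ℝ) ^ (5 : ℝ) :=
      Real.rpow_le_rpow_of_exponent_le (by norm_num) (by norm_num)
    have h2 : (16 : ℝ) ^ (5 : ℝ) = 1048576 := by
      rw [show (5 : ℝ) = ((5 : ℕ) : ℝ) from by norm_num, Real.rpow_natCast]
      norm_num
    linarith
  have hAB : A * (Λ ^ ((4 : ℝ) / 3)) = Λ ^ 2 * B := by
    rw [hA_def, hB_def, ← Real.rpow_add hΛpos,
      show Λ ^ 2 = Λ ^ ((2 : ℕ) : ℝ) from (Real.rpow_natCast Λ 2).symm,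
      ← Real.rpow_add hΛpos]
    norm_num
  -- r ≥ 4Λ
  have hr4Λ : 4 * Λ ≤ r := by
    have h13 : (4 : ℝ) ≤ Λ ^ ((1 : ℝ) / 3) := by
      refine stmt14_aux_rpow 4 Λ ((1 : ℝ) / 3) (3 : ℝ) (by norm_num) (by norm_num)
        (by norm_num) ?_
      have : (4 : ℝ) ^ (3 : ℝ) = 64 := by
        rw [show (3 : ℝ) = ((3 : ℕ) : ℝ) from by norm_num, Real.rpow_natCast]
        norm_num
      linarith
    have h43 : Λ ^ ((4 : ℝ) / 3) = Λ * Λ ^ ((1 : ℝ) / 3) := by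
      calc Λ ^ ((4 : ℝ) / 3) = Λ ^ ((1 : ℝ) + 1 / 3) := by norm_num
      _ = Λ ^ (1 : ℝ) * Λ ^ ((1 : ℝ) / 3) := Real.rpow_add hΛpos _ _
      _ = Λ * Λ ^ ((1 : ℝ) / 3) := by rw [Real.rpow_one]
    have := mul_le_mul_of_nonneg_left h13 (le_of_lt hΛpos)
    linarith
  -- the key arithmetic inequality
  have hkey : r * (Λ + 1) ≤ (1 + ε) * Λ * (r - 3 * Λ - 1) := by
    have h1 : r ≤ A * r / 2 := by
      have := mul_le_mul_of_nonneg_right hA2 hr0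
      linarith
    have h2 : 8 * Λ ^ 2 ≤ A * r / 2 := by
      have hAr : A * (Λ ^ ((4 : ℝ) / 3)) ≤ A * r :=
        mul_le_mul_of_nonneg_left hr43 (by linarith)
      rw [hAB] at hAr
      have h16 : Λ ^ 2 * 16 ≤ Λ ^ 2 * B :=
        mul_le_mul_of_nonneg_left hB16 (sq_nonneg Λ)
      linarith
    have hAleΛ : A ≤ Λ := by
      have := mul_le_mul_of_nonneg_right hε1 (le_of_lt hΛpos)
      rw [hεΛ] at this
      linarith
    have hexp : (1 + ε) * Λ * (r - 3 * Λ - 1)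
        = Λ * (r - 3 * Λ - 1) + A * (r - 3 * Λ - 1) := by
      rw [← hεΛ]; ring
    rw [hexp]
    have h3 : A * (3 * Λ + 1) ≤ Λ * (3 * Λ + 1) :=
      mul_le_mul_of_nonneg_right hAleΛ (by linarith)
    have h4 : 1 * Λ ≤ Λ * Λ := mul_le_mul_of_nonneg_right hΛ1 (le_of_lt hΛpos)
    nlinarith [h1, h2, h3, h4]
  -- subharmonicity at scale k, specialized
  have hs := hsub y k hk0k hklow hkhigh
  set q : ℝ := Real.exp (-m * (1 + ε) * Λ) with hq_def
  have hq0 : 0 ≤ q := le_of_lt (Real.exp_pos _)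
  -- iteration
  have iter : ∀ n : ℕ, ((n : ℝ) - 1) * (Λ + 1) ≤ r - 3 * Λ - 1 →
      ∃ z, ‖z - y‖ ≤ (n : ℝ) * (Λ + 1) ∧ |ψ y| ≤ q ^ n * |ψ z| := by
    intro n
    induction n with
    | zero =>
      intro _
      exact ⟨y, by simp, by simp⟩
    | succ n ih =>
      intro hcond
      push_cast at hcond
      have hΛ1pos : (0 : ℝ) < Λ + 1 := by linarith
      have hcond' : ((n : ℝ) - 1) * (Λ + 1) ≤ r - 3 * Λ - 1 := by
        have hmul : ((n : ℝ) - 1) * (Λ + 1) ≤ ((n : ℝ) + 1 - 1) * (Λ + 1) :=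
          mul_le_mul_of_nonneg_right (by linarith) (le_of_lt hΛ1pos)
        linarith
      obtain ⟨z, hz, hψz⟩ := ih hcond'
      have hball : ∀ w : Fin d → ℤ, ‖w - z‖ ≤ Λ → ‖w - y‖ ≤ r - 2 * Λ - 1 := by
        intro w hw
        have htri : ‖w - y‖ ≤ ‖w - z‖ + ‖z - y‖ := by
          have := dist_triangle w z y
          simpa [dist_eq_norm] using this
        linarith
      obtain ⟨z', hz', hqz⟩ := hs z hball
      refine ⟨z', ?_, ?_⟩
      · have htri : ‖z' - y‖ ≤ ‖z' - z‖ + ‖z - y‖ := by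
          have := dist_triangle z' z y
          simpa [dist_eq_norm] using this
        have hrw : ((n : ℕ) + 1 : ℝ) * (Λ + 1) = (n : ℝ) * (Λ + 1) + (Λ + 1) := by ring
        push_cast
        linarith
      · calc |ψ y| ≤ q ^ n * |ψ z| := hψz
        _ ≤ q ^ n * (q * |ψ z'|) := by
          refine mul_le_mul_of_nonneg_left ?_ (pow_nonneg hq0 n)
          exact hqz
        _ = q ^ (n + 1) * |ψ z'| := by ring
  -- choose the number of steps
  set X : ℝ := (r - 3 * Λ - 1) / (Λ + 1) with hX_def
  have hΛ1pos : (0 : ℝ) < Λ + 1 := by linarith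
  have hXnum : (0 : ℝ) ≤ r - 3 * Λ - 1 := by linarith
  have hX0 : 0 ≤ X := div_nonneg hXnum (le_of_lt hΛ1pos)
  set n : ℕ := ⌈X⌉₊ with hn_def
  have hnX : X ≤ (n : ℝ) := Nat.le_ceil X
  have hn1 : (n : ℝ) < X + 1 := Nat.ceil_lt_add_one hX0
  have hXmul : X * (Λ + 1) = r - 3 * Λ - 1 := div_mul_cancel₀ _ (ne_of_gt hΛ1pos)
  have hcond : ((n : ℝ) - 1) * (Λ + 1) ≤ r - 3 * Λ - 1 := by
    rw [← hXmul]
    exact mul_le_mul_of_nonneg_right (by linarith) (le_of_lt hΛ1pos)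
  obtain ⟨z, hz, hψz⟩ := iter n hcond
  -- conclude
  have hrle : r ≤ (1 + ε) * Λ * (n : ℝ) := by
    have h1 : r ≤ (1 + ε) * Λ * X := by
      rw [← mul_le_mul_iff_of_pos_right hΛ1pos]
      calc r * (Λ + 1) ≤ (1 + ε) * Λ * (r - 3 * Λ - 1) := hkey
      _ = (1 + ε) * Λ * X * (Λ + 1) := by rw [mul_assoc ((1 + ε) * Λ) X (Λ + 1), hXmul]
    have h2 : (1 + ε) * Λ * X ≤ (1 + ε) * Λ * (n : ℝ) := by
      refine mul_le_mul_of_nonneg_left hnX ?_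
      have : (0:ℝ) ≤ 1 + ε := by linarith
      exact mul_nonneg this (le_of_lt hΛpos)
    linarith
  have hqn : q ^ n ≤ Real.exp (-m * r) := by
    rw [hq_def, ← Real.exp_nat_mul]
    apply Real.exp_le_exp.mpr
    have : (n : ℝ) * (-m * (1 + ε) * Λ) = -(m * ((1 + ε) * Λ * (n : ℝ))) := by ring
    rw [this]
    have h1 : m * r ≤ m * ((1 + ε) * Λ * (n : ℝ)) :=
      mul_le_mul_of_nonneg_left hrle (le_of_lt hm)
    linarith
  calc |ψ y| ≤ q ^ n * |ψ z| := hψz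
  _ ≤ q ^ n * 1 := mul_le_mul_of_nonneg_left (hψ z) (pow_nonneg hq0 n)
  _ = q ^ n := mul_one _
  _ ≤ Real.exp (-m * r) := hqn
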